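/- Let y > 0 be real and n ≥ 1 an integer. Then r̃(1, y, n) = (1/√(2π)) ∫_{-∞}^{∞} [ Σ_{l=0}^{n-1} ((n-1)√y · t)^{2l} / (2l)! ] · e^{-t²/2} dt; that is, r̃(1,y,n) equals the expected value of 2cosh_{2(n-1)}((n-1)√y · X) for X a standard normal random variable, where 2cosh_{2m}(u) = Σ_{k=0}^{m} u^{2k}/(2k)!. -/

import Mathlib

open Real MeasureTheory

lemma gamma_nat_add_half (l : ℕ) :
    Real.Gamma ((l : ℝ) + 1/2) = Real.sqrt Real.pi * (Nat.factorial (2*l) : ℝ) / (4 ^ l * (Nat.factorial l : ℝ)) := by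
  induction l with
  | zero => simpa using Real.Gamma_one_half_eq
  | succ l ih =>
    have h : ((l : ℝ) + 1) + 1/2 = ((l : ℝ) + 1/2) + 1 := by ring
    rw [Nat.cast_succ, h, Real.Gamma_add_one (by positivity), ih]
    have e1 : (Nat.factorial (2*(l+1)) : ℝ) = (2*(l:ℝ)+2)*(2*l+1)*(Nat.factorial (2*l) : ℝ) := by
      rw [show 2*(l+1) = (2*l+1)+1 from by ring, Nat.factorial_succ, Nat.factorial_succ]
      push_cast; ring
    have e2 : (Nat.factorial (l+1) : ℝ) = ((l:ℝ)+1)*(Nat.factorial l : ℝ) := by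
      rw [Nat.factorial_succ]; push_cast; ring
    rw [e1, e2]
    have hl : (Nat.factorial l : ℝ) ≠ 0 := Nat.cast_ne_zero.mpr (Nat.factorial_ne_zero l)
    have h4 : (4:ℝ) ^ l ≠ 0 := by positivity
    have hl1 : (l:ℝ) + 1 ≠ 0 := by positivity
    field_simp
    ring

lemma integrable_aux (b : ℕ) : Integrable fun t : ℝ => t ^ b * Real.exp (-t^2/2) := by
  have h := integrable_rpow_mul_exp_neg_mul_sq (b := 1/2) (by norm_num)
    (s := (b : ℝ)) (lt_of_lt_of_le neg_one_lt_zero (Nat.cast_nonneg b))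
  have he : (fun x : ℝ => x ^ ((b:ℝ)) * Real.exp (-(1/2) * x^2))
      = fun t : ℝ => t ^ b * Real.exp (-t^2/2) := by
    funext x; rw [Real.rpow_natCast]; ring_nf
  rwa [he] at h

lemma moment_eq (l : ℕ) :
    (∫ t : ℝ, t ^ (2*l) * Real.exp (-t^2/2)) =
      Real.sqrt (2 * Real.pi) * (Nat.factorial (2*l) : ℝ) / (2 ^ l * (Nat.factorial l : ℝ)) := by
  have heven : (∫ t : ℝ, t ^ (2*l) * Real.exp (-t^2/2))
      = ∫ t : ℝ, (fun x : ℝ => x ^ (2*l) * Real.exp (-x^2/2)) |t| := by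
    congr 1; funext t
    simp only [(even_two_mul l).pow_abs, sq_abs]
  rw [heven, integral_comp_abs (f := fun x => x ^ (2*l) * Real.exp (-x^2/2))]
  have hIoi : ∫ x in Set.Ioi (0:ℝ), x ^ (2*l) * Real.exp (-x^2/2)
      = ((1:ℝ)/2) ^ (-(((2*l : ℕ) : ℝ) + 1)/2) * (1/2) * Real.Gamma ((((2*l : ℕ):ℝ) + 1)/2) := by
    rw [← integral_rpow_mul_exp_neg_mul_rpow (p := 2) (q := ((2*l : ℕ) : ℝ)) (b := 1/2)
      two_pos (lt_of_lt_of_le neg_one_lt_zero (Nat.cast_nonneg _)) (by norm_num)]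
    refine setIntegral_congr_fun measurableSet_Ioi fun x hx => ?_
    rw [Real.rpow_natCast, Real.rpow_two]
    congr 1
    ring_nf
  rw [hIoi]
  rw [show ((((2*l : ℕ):ℝ)) + 1)/2 = (l : ℝ) + 1/2 by push_cast; ring, gamma_nat_add_half]
  have h1 : ((1:ℝ)/2) ^ (-(((2*l : ℕ) : ℝ) + 1)/2) = 2 ^ l * Real.sqrt 2 := by
    rw [show (-(((2*l : ℕ) : ℝ) + 1)/2) = -((l:ℝ) + 1/2) from by push_cast; ring]
    rw [one_div, Real.inv_rpow (by norm_num), Real.rpow_neg (by norm_num), inv_inv,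
      Real.rpow_add (by norm_num), Real.rpow_natCast]
    rw [Real.sqrt_eq_rpow]
    norm_num
  rw [h1]
  have hs : Real.sqrt 2 * Real.sqrt Real.pi = Real.sqrt (2 * Real.pi) :=
    (Real.sqrt_mul (by norm_num) _).symm
  have h4 : (4:ℝ) ^ l = 2^l * 2^l := by rw [show (4:ℝ) = 2*2 from by norm_num, mul_pow]
  have hl : (Nat.factorial l : ℝ) ≠ 0 := Nat.cast_ne_zero.mpr (Nat.factorial_ne_zero l)
  have h2 : (2:ℝ)^l ≠ 0 := by positivity
  field_simp [h4, ← hs]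
  rw [← hs, h4]
  ring


/-- The continuous-analogue Pochhammer symbol
`r̃(x,y,n) = Σ_{k=1}^{n} ((n-1)^{2(n-k)} / (2^{n-k} (n-k)!)) x^k y^{n-k}`,
with `r̃(x,y,0) = 1`. -/
noncomputable def rtilde (x y : ℝ) (n : ℕ) : ℝ :=
  if n = 0 then 1 else
    ∑ k ∈ Finset.Icc 1 n,
      ((n : ℝ) - 1) ^ (2 * (n - k)) / (2 ^ (n - k) * (Nat.factorial (n - k) : ℝ))
        * x ^ k * y ^ (n - k)

/-- For `y > 0` and `n ≥ 1`, `r̃(1,y,n)` is the expected value of the truncated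
hyperbolic cosine `2cosh_{2(n-1)}((n-1)√y X)` for `X` standard normal:
`r̃(1,y,n) = (1/√(2π)) ∫_{-∞}^{∞} (Σ_{l=0}^{n-1} ((n-1)√y t)^{2l}/(2l)!) e^{-t²/2} dt`. -/
theorem rtilde_eq_gaussian_integral (y : ℝ) (hy : 0 < y) (n : ℕ) (hn : 1 ≤ n) :
    rtilde 1 y n =
      (1 / Real.sqrt (2 * Real.pi)) *
        ∫ t : ℝ,
          (∑ l ∈ Finset.range n,
            (((n : ℝ) - 1) * Real.sqrt y * t) ^ (2 * l) / (Nat.factorial (2 * l) : ℝ))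
            * Real.exp (-t ^ 2 / 2) := by
  set c : ℝ := ((n : ℝ) - 1) with hc
  have hsq : Real.sqrt (2 * Real.pi) ≠ 0 := by positivity
  set C : ℕ → ℝ := fun l => (c ^ 2 * y) ^ l / (Nat.factorial (2*l) : ℝ) with hC
  have step1 : (∫ t : ℝ,
      (∑ l ∈ Finset.range n, (c * Real.sqrt y * t) ^ (2 * l) / (Nat.factorial (2 * l) : ℝ))
        * Real.exp (-t ^ 2 / 2))
      = ∑ l ∈ Finset.range n, C l * ∫ t : ℝ, t ^ (2*l) * Real.exp (-t^2/2) := by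
    have h1 : (fun t : ℝ =>
        (∑ l ∈ Finset.range n, (c * Real.sqrt y * t) ^ (2 * l) / (Nat.factorial (2 * l) : ℝ))
          * Real.exp (-t ^ 2 / 2))
        = fun t : ℝ => ∑ l ∈ Finset.range n, C l * (t ^ (2*l) * Real.exp (-t^2/2)) := by
      funext t
      rw [Finset.sum_mul]
      refine Finset.sum_congr rfl fun l _ => ?_
      have h2 : (c * Real.sqrt y * t) ^ (2 * l) = (c^2 * y)^l * t ^ (2*l) := by
        rw [mul_pow, pow_mul, mul_pow, Real.sq_sqrt hy.le]
      rw [h2, hC]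
      ring
    rw [h1, integral_finset_sum _ fun l _ => ((integrable_aux (2*l)).const_mul _)]
    exact Finset.sum_congr rfl fun l _ => integral_const_mul _ _
  rw [step1]
  have step2 : (1 / Real.sqrt (2 * Real.pi)) *
      (∑ l ∈ Finset.range n, C l * ∫ t : ℝ, t ^ (2*l) * Real.exp (-t^2/2))
      = ∑ l ∈ Finset.range n, c ^ (2*l) * y ^ l / (2 ^ l * (Nat.factorial l : ℝ)) := by
    rw [Finset.mul_sum]
    refine Finset.sum_congr rfl fun l _ => ?_
    rw [moment_eq l, hC]
    have hf : (Nat.factorial (2*l) : ℝ) ≠ 0 := Nat.cast_ne_zero.mpr (Nat.factorial_ne_zero _)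
    have hfl : (Nat.factorial l : ℝ) ≠ 0 := Nat.cast_ne_zero.mpr (Nat.factorial_ne_zero _)
    have h2l : (2:ℝ)^l ≠ 0 := by positivity
    have hcy : (c^2 * y)^l = c^(2*l) * y^l := by rw [mul_pow, ← pow_mul]
    field_simp [hcy]
    ring
  rw [step2]
  rw [rtilde, if_neg (by omega)]
  refine Finset.sum_nbij' (i := fun k => n - k) (j := fun l => n - l) ?_ ?_ ?_ ?_ ?_
  · intro k hk; simp only [Finset.mem_Icc] at hk; simp only [Finset.mem_range]; omega
  · intro l hl; simp only [Finset.mem_range] at hl; simp only [Finset.mem_Icc]; omega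
  · intro k hk; simp only [Finset.mem_Icc] at hk; show n - (n - k) = k; omega
  · intro l hl; simp only [Finset.mem_range] at hl; show n - (n - l) = l; omega
  · intro k hk
    simp only [one_pow, mul_one]
    ring
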